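/- arXiv:math/9903062 — 2 statements merged into one kernel-verified Lean document; each statement's English description precedes it below -/
import Mathlib

section
/- Let κ be a nonempty finite index type, let ι be a nonempty index type, and let a : ι → κ → ℝ be a family of strictly positive real numbers. Let z : κ → ℂ be a nonzero vector satisfying ∑_{j ∈ κ} a i j · (z j)² = 0 for every i ∈ ι. Then the point of the complex projective space ℙ(κ → ℂ) determined by z is distinct from the point determined by the componentwise complex conjugate vector j ↦ conj(z j); equivalently, there is no complex scalar λ with conj(z j) = λ · z j for all j. -/
/-- The conjugation involution `σ([z]) = [z̄]` of complex projective space has no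
fixed points on the intersection of quadrics `∑ j, a i j * (z j)^2 = 0` with
strictly positive real coefficients `a i j`. -/
theorem stmt_0 {κ ι : Type*} [Fintype κ] [Nonempty κ] [Nonempty ι]
    (a : ι → κ → ℝ) (ha : ∀ i j, 0 < a i j)
    (z : κ → ℂ) (hz : z ≠ 0)
    (hquad : ∀ i, ∑ j, (a i j : ℂ) * (z j) ^ 2 = 0)
    (hz' : (fun j => (starRingEnd ℂ) (z j)) ≠ 0) :
    Projectivization.mk ℂ z hz ≠
      Projectivization.mk ℂ (fun j => (starRingEnd ℂ) (z j)) hz' ∧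
    ¬ ∃ l : ℂ, ∀ j, (starRingEnd ℂ) (z j) = l * z j := by
  have key : ¬ ∃ l : ℂ, ∀ j, (starRingEnd ℂ) (z j) = l * z j := by
    rintro ⟨l, hl⟩
    have i : ι := Classical.arbitrary ι
    have h1 : ∑ j, (a i j : ℂ) * ((Complex.normSq (z j) : ℝ) : ℂ) = 0 := by
      calc ∑ j, (a i j : ℂ) * ((Complex.normSq (z j) : ℝ) : ℂ)
          = l * ∑ j, (a i j : ℂ) * (z j) ^ 2 := by
            rw [Finset.mul_sum]
            refine Finset.sum_congr rfl fun j _ => ?_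
            rw [← Complex.mul_conj, hl j]; ring
        _ = 0 := by rw [hquad i]; ring
    have h2 : ∑ j, a i j * Complex.normSq (z j) = 0 := by
      have := h1
      push_cast at this
      exact_mod_cast this
    have h3 : ∀ j ∈ Finset.univ, a i j * Complex.normSq (z j) = 0 := by
      refine (Finset.sum_eq_zero_iff_of_nonneg fun j _ => ?_).mp h2
      exact mul_nonneg (ha i j).le (Complex.normSq_nonneg _)
    apply hz
    funext j
    have := h3 j (Finset.mem_univ j)
    have hns : Complex.normSq (z j) = 0 := by
      rcases mul_eq_zero.mp this with h | h
      · exact absurd h (ha i j).ne'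
      · exact h
    exact Complex.normSq_eq_zero.mp hns
  refine ⟨?_, key⟩
  intro h
  obtain ⟨u, hu⟩ := (Projectivization.mk_eq_mk_iff ℂ _ _ _ _).mp h
  apply key
  refine ⟨(u⁻¹ : ℂˣ), fun j => ?_⟩
  have := congrFun hu j
  simp only [Pi.smul_apply, Units.smul_def, smul_eq_mul] at this
  field_simp
  rw [mul_comm]
  have hu1 := u.mul_inv
  linear_combination (↑u⁻¹ : ℂ) * this - (starRingEnd ℂ) (z j) * hu1
end

section
/- Let q be a quaternion with ‖q‖ = 1 whose imaginary part is nonzero, and let v be a nonzero purely imaginary quaternion that is orthogonal (for the standard real inner product on ℍ) to the imaginary part im(q) of q. Then q·v·q⁻¹ ≠ v; that is, conjugation by q moves every nonzero imaginary vector orthogonal to the axis im(q). -/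
open scoped Quaternion RealInnerProductSpace

/-- For a unit quaternion `q` with nonzero imaginary part, conjugation by `q`
moves every nonzero purely imaginary quaternion orthogonal to the axis `im q`. -/
theorem stmt_4 (q : ℍ[ℝ]) (hq : ‖q‖ = 1) (hq' : q.im ≠ 0)
    (v : ℍ[ℝ]) (hv : v ≠ 0) (hv' : v.re = 0) (hperp : ⟪v, q.im⟫ = 0) :
    q * v * q⁻¹ ≠ v := by
  intro h
  have hq0 : q ≠ 0 := by
    intro h0
    rw [h0, norm_zero] at hq
    norm_num at hq
  have hcomm : q * v = v * q := by
    have := congrArg (· * q) h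
    simpa [mul_assoc, inv_mul_cancel₀ hq0] using this
  -- extract components
  rw [Quaternion.ext_iff] at hcomm
  obtain ⟨h1, h2, h3, h4⟩ := hcomm
  simp only [Quaternion.re_mul, Quaternion.imI_mul, Quaternion.imJ_mul,
    Quaternion.imK_mul] at h1 h2 h3 h4
  rw [Quaternion.inner_def] at hperp
  simp only [Quaternion.re_mul, Quaternion.re_star, Quaternion.imI_star,
    Quaternion.imJ_star, Quaternion.imK_star, Quaternion.re_im,
    Quaternion.imI_im, Quaternion.imJ_im, Quaternion.imK_im] at hperp
  have hvne : v.imI ≠ 0 ∨ v.imJ ≠ 0 ∨ v.imK ≠ 0 := by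
    by_contra hc
    push_neg at hc
    apply hv
    rw [Quaternion.ext_iff]
    exact ⟨hv', hc.1, hc.2.1, hc.2.2⟩
  have hqne : q.imI ≠ 0 ∨ q.imJ ≠ 0 ∨ q.imK ≠ 0 := by
    by_contra hc
    push_neg at hc
    apply hq'
    rw [Quaternion.ext_iff]
    simp [Quaternion.re_im, hc.1, hc.2.1, hc.2.2]
  -- cross product components are zero from commuting
  have c1 : q.imJ * v.imK - q.imK * v.imJ = 0 := by
    nlinarith [h2, hv']
  have c2 : q.imK * v.imI - q.imI * v.imK = 0 := by nlinarith [h3, hv']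
  have c3 : q.imI * v.imJ - q.imJ * v.imI = 0 := by nlinarith [h4, hv']
  have hvsq : v.imI ^ 2 + v.imJ ^ 2 + v.imK ^ 2 > 0 := by
    rcases hvne with h | h | h <;> positivity
  have hqsq : q.imI ^ 2 + q.imJ ^ 2 + q.imK ^ 2 > 0 := by
    rcases hqne with h | h | h <;> positivity
  nlinarith [sq_nonneg (q.imI * v.imI + q.imJ * v.imJ + q.imK * v.imK),
    hperp, c1, c2, c3, mul_pos hvsq hqsq]
end
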